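/- Let Z₁ ∈ ℝ^{n×n} and Z₃ ∈ ℝ^{ℓ×ℓ} symmetric, Z₂ ∈ ℝ^{n×ℓ}, W ∈ ℝ^{p×n}, and suppose the block matrix [[Z₁ + WᵀW, Z₂],[Z₂ᵀ, Z₃ − I]] is negative definite. Then for every x ∈ ℝ^n and every φ ∈ ℝ^ℓ with ‖φ‖ ≤ ‖Wx‖ and (x,φ) ≠ (0,0): xᵀZ₁x + 2xᵀZ₂φ + φᵀZ₃φ < 0. -/

import Mathlib

open Matrix

theorem stmt_15 (n ℓ p : ℕ)
    (Z₁ : Matrix (Fin n) (Fin n) ℝ) (hZ₁ : Z₁.IsSymm)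
    (Z₃ : Matrix (Fin ℓ) (Fin ℓ) ℝ) (hZ₃ : Z₃.IsSymm)
    (Z₂ : Matrix (Fin n) (Fin ℓ) ℝ) (W : Matrix (Fin p) (Fin n) ℝ)
    (hLMI : (-(Matrix.fromBlocks (Z₁ + Wᵀ * W) Z₂ Z₂ᵀ (Z₃ - 1))).PosDef) :
    ∀ (x : Fin n → ℝ) (φ : Fin ℓ → ℝ),
      Real.sqrt (φ ⬝ᵥ φ) ≤ Real.sqrt (W.mulVec x ⬝ᵥ W.mulVec x) →
      ¬(x = 0 ∧ φ = 0) →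
      x ⬝ᵥ Z₁.mulVec x + 2 * (x ⬝ᵥ Z₂.mulVec φ) + φ ⬝ᵥ Z₃.mulVec φ < 0 := by
  intro x φ hnorm hne
  set z : (Fin n ⊕ Fin ℓ) → ℝ := Sum.elim x φ with hz
  have hz0 : z ≠ 0 := by
    intro h
    apply hne
    constructor
    · funext i; exact congrFun h (Sum.inl i)
    · funext i; exact congrFun h (Sum.inr i)
  have hpos := hLMI.dotProduct_mulVec_pos hz0
  rw [star_trivial, neg_mulVec, dotProduct_neg] at hpos
  have hqlt : z ⬝ᵥ (Matrix.fromBlocks (Z₁ + Wᵀ * W) Z₂ Z₂ᵀ (Z₃ - 1)).mulVec z < 0 := by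
    linarith
  have hexpand : z ⬝ᵥ (Matrix.fromBlocks (Z₁ + Wᵀ * W) Z₂ Z₂ᵀ (Z₃ - 1)).mulVec z
      = x ⬝ᵥ Z₁.mulVec x + 2 * (x ⬝ᵥ Z₂.mulVec φ) + φ ⬝ᵥ Z₃.mulVec φ
        + (W.mulVec x ⬝ᵥ W.mulVec x - φ ⬝ᵥ φ) := by
    rw [hz, Matrix.fromBlocks_mulVec, sumElim_dotProduct_sumElim]
    have h1 : x ⬝ᵥ ((Z₁ + Wᵀ * W).mulVec x + Z₂.mulVec φ)
        = x ⬝ᵥ Z₁.mulVec x + W.mulVec x ⬝ᵥ W.mulVec x + x ⬝ᵥ Z₂.mulVec φ := by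
      rw [dotProduct_add, add_mulVec, dotProduct_add, ← Matrix.mulVec_mulVec,
        Matrix.dotProduct_mulVec x Wᵀ, Matrix.vecMul_transpose]
    have h2 : φ ⬝ᵥ (Z₂ᵀ.mulVec x + (Z₃ - 1).mulVec φ)
        = x ⬝ᵥ Z₂.mulVec φ + φ ⬝ᵥ Z₃.mulVec φ - φ ⬝ᵥ φ := by
      rw [dotProduct_add, sub_mulVec, dotProduct_sub, Matrix.mulVec_transpose,
        Matrix.dotProduct_mulVec x Z₂, Matrix.one_mulVec]
      ring_nf
      rw [dotProduct_comm φ (Z₂.vecMul x)]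
      ring
    simp only [Sum.elim_comp_inl, Sum.elim_comp_inr] 
    rw [h1, h2]; ring
  have hdom : φ ⬝ᵥ φ ≤ W.mulVec x ⬝ᵥ W.mulVec x := by
    have h1 : (0:ℝ) ≤ φ ⬝ᵥ φ := Finset.sum_nonneg fun i _ => mul_self_nonneg (φ i)
    have h2 : (0:ℝ) ≤ W.mulVec x ⬝ᵥ W.mulVec x := Finset.sum_nonneg fun i _ => mul_self_nonneg (W.mulVec x i)
    nlinarith [Real.sq_sqrt h1, Real.sq_sqrt h2, Real.sqrt_nonneg (φ ⬝ᵥ φ),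
      Real.sqrt_nonneg (W.mulVec x ⬝ᵥ W.mulVec x)]
  linarith [hexpand ▸ hqlt]
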